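/- Under the same setup, m₁ defined by m₁(r) = r^{-3}∫₀^r x² m₂(x) dx (m₁(0)=0) is three times differentiable at 0 with m₁'''(0) = m₂'''(0)/6, and m₁ ∈ C³([0,b]). -/

import Mathlib

open Set intervalIntegral MeasureTheory

/-- Key identity: the parametric moment integral equals a constant plus the primitive of the
next-level parametric integral. -/
lemma aux_key {b : ℝ} (p : ℕ) (f F : ℝ → ℝ)
    (hf : ContinuousOn f (Icc 0 b)) (hF : ContinuousOn F (Icc 0 b))
    (hd : ∀ x ∈ Ioo 0 b, HasDerivAt f (F x) x) (r : ℝ) (hr : r ∈ Icc 0 b) :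
    (∫ t in (0:ℝ)..1, t ^ (p+2) * f (r*t))
      = f 0 / (p+3) + ∫ u in (0:ℝ)..r, ∫ t in (0:ℝ)..1, t ^ (p+1+2) * F (u*t) := by
  have h0r : (0:ℝ) ≤ r := hr.1
  have hrb : r ≤ b := hr.2
  -- inner FTC, for every t ∈ [0,1]
  have inner : ∀ t ∈ Icc (0:ℝ) 1,
      (∫ u in (0:ℝ)..r, t ^ (p+1+2) * F (u*t))
        = t^(p+2) * f (r*t) - t^(p+2) * f 0 := by
    intro t ht
    rcases eq_or_lt_of_le ht.1 with h0 | h0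
    · rw [← h0]
      simp [zero_pow (by omega : p+1+2 ≠ 0), zero_pow (by omega : p+2 ≠ 0)]
    · have hmaps : MapsTo (fun u : ℝ => u * t) (Icc 0 r) (Icc 0 b) := by
        intro u hu
        exact ⟨mul_nonneg hu.1 h0.le,
          le_trans (le_trans (mul_le_of_le_one_right hu.1 ht.2) hu.2) hrb⟩
      have hcont : ContinuousOn (fun u : ℝ => t^(p+2) * f (u*t)) (Icc 0 r) :=
        continuousOn_const.mul (hf.comp ((continuous_id.mul continuous_const).continuousOn) hmaps)
      have hderiv : ∀ x ∈ Ioo (0:ℝ) r,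
          HasDerivAt (fun u : ℝ => t^(p+2) * f (u*t)) (t^(p+1+2) * F (x*t)) x := by
        intro x hx
        have hxt : x*t ∈ Ioo (0:ℝ) b :=
          ⟨mul_pos hx.1 h0,
            lt_of_le_of_lt (mul_le_of_le_one_right hx.1.le ht.2) (lt_of_lt_of_le hx.2 hrb)⟩
        have hid : HasDerivAt (fun u : ℝ => u * t) t x := by
          simpa using (hasDerivAt_id x).mul_const t
        have h1 : HasDerivAt (fun u : ℝ => f (u*t)) (F (x*t) * t) x :=
          (hd _ hxt).comp x hid
        have h2 := h1.const_mul (t^(p+2))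
        rw [show t^(p+1+2) * F (x*t) = t^(p+2) * (F (x*t) * t) by ring]
        exact h2
      have hint : IntervalIntegrable (fun u : ℝ => t^(p+1+2) * F (u*t)) volume 0 r := by
        apply ContinuousOn.intervalIntegrable
        rw [uIcc_of_le h0r]
        exact continuousOn_const.mul
          (hF.comp ((continuous_id.mul continuous_const).continuousOn) hmaps)
      have h3 := intervalIntegral.integral_eq_sub_of_hasDeriv_right_of_le h0r hcont
        (fun x hx => (hderiv x hx).hasDerivWithinAt) hint
      simpa using h3
  -- Fubini
  have hmaps2 : MapsTo (fun q : ℝ × ℝ => q.1 * q.2) (Icc 0 r ×ˢ Icc 0 1) (Icc 0 b) := by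
    rintro ⟨u, t⟩ ⟨hu, ht⟩
    exact ⟨mul_nonneg hu.1 ht.1,
      le_trans (le_trans (mul_le_of_le_one_right hu.1 ht.2) hu.2) hrb⟩
  have hcont2 : ContinuousOn (fun q : ℝ × ℝ => q.2 ^ (p+1+2) * F (q.1*q.2))
      (Icc 0 r ×ˢ Icc 0 1) :=
    ((continuous_snd.pow _).continuousOn).mul
      (hF.comp ((continuous_fst.mul continuous_snd).continuousOn) hmaps2)
  have hInt : Integrable (Function.uncurry fun u t : ℝ => t ^ (p+1+2) * F (u*t))
      ((volume.restrict (Ioc (0:ℝ) r)).prod (volume.restrict (Ioc (0:ℝ) 1))) := by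
    rw [Measure.prod_restrict]
    have hcompact : IsCompact (Icc (0:ℝ) r ×ˢ Icc (0:ℝ) 1) := isCompact_Icc.prod isCompact_Icc
    have h1 : IntegrableOn (fun q : ℝ × ℝ => q.2 ^ (p+1+2) * F (q.1*q.2))
        (Icc (0:ℝ) r ×ˢ Icc (0:ℝ) 1) volume := hcont2.integrableOn_compact hcompact
    rw [Measure.volume_eq_prod] at h1
    exact h1.mono_set (prod_mono Ioc_subset_Icc_self Ioc_subset_Icc_self)
  have swap : (∫ u in (0:ℝ)..r, ∫ t in (0:ℝ)..1, t ^ (p+1+2) * F (u*t))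
      = ∫ t in (0:ℝ)..1, ∫ u in (0:ℝ)..r, t ^ (p+1+2) * F (u*t) := by
    rw [intervalIntegral.integral_of_le h0r,
      intervalIntegral.integral_of_le (zero_le_one : (0:ℝ) ≤ 1)]
    simp_rw [intervalIntegral.integral_of_le h0r,
      intervalIntegral.integral_of_le (zero_le_one : (0:ℝ) ≤ 1)]
    exact MeasureTheory.integral_integral_swap hInt
  rw [swap]
  have e2 : (∫ t in (0:ℝ)..1, ∫ u in (0:ℝ)..r, t ^ (p+1+2) * F (u*t))
      = ∫ t in (0:ℝ)..1, (t^(p+2) * f (r*t) - t^(p+2) * f 0) := by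
    apply intervalIntegral.integral_congr
    intro t ht
    rw [uIcc_of_le (zero_le_one : (0:ℝ) ≤ 1)] at ht
    exact inner t ht
  rw [e2]
  have hi1 : IntervalIntegrable (fun t : ℝ => t^(p+2) * f (r*t)) volume 0 1 := by
    apply ContinuousOn.intervalIntegrable
    rw [uIcc_of_le (zero_le_one : (0:ℝ) ≤ 1)]
    apply (continuousOn_id.pow _).mul
      (hf.comp ((continuous_const.mul continuous_id).continuousOn) ?_)
    intro t ht
    exact ⟨mul_nonneg h0r ht.1, le_trans (mul_le_of_le_one_right h0r ht.2) hrb⟩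
  have hi2 : IntervalIntegrable (fun t : ℝ => t^(p+2) * f 0) volume 0 1 :=
    ContinuousOn.intervalIntegrable (by fun_prop)
  rw [intervalIntegral.integral_sub hi1 hi2]
  have hc : (∫ t in (0:ℝ)..1, t^(p+2) * f 0) = f 0 / (p+3) := by
    rw [intervalIntegral.integral_mul_const, integral_pow]
    rw [zero_pow (by omega : p+2+1 ≠ 0), one_pow]
    push_cast
    ring
  rw [hc]
  ring

/-- Under the same setup, `m₁` is three times differentiable at `0`
with `m₁'''(0) = m₂'''(0)/6`, and `m₁ ∈ C³[0,b]`. -/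
theorem stmt2 (b : ℝ) (hb : 0 < b) (m₁ m₂ : ℝ → ℝ)
    (hm₂ : ContDiffOn ℝ 3 m₂ (Icc 0 b)) (hm₂0 : m₂ 0 = 0)
    (hm₁ : ∀ r ∈ Ioc 0 b, m₁ r = r⁻¹ ^ 3 * ∫ x in (0:ℝ)..r, x ^ 2 * m₂ x)
    (hm₁0 : m₁ 0 = 0) :
    ContDiffOn ℝ 3 m₁ (Icc 0 b) ∧
    iteratedDerivWithin 3 m₁ (Icc 0 b) 0 = iteratedDerivWithin 3 m₂ (Icc 0 b) 0 / 6 := by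
  have hb' : (0:ℝ) ≤ b := hb.le
  have hus : UniqueDiffOn ℝ (Icc (0:ℝ) b) := uniqueDiffOn_Icc hb
  have h0mem : (0:ℝ) ∈ Icc (0:ℝ) b := left_mem_Icc.2 hb'
  -- continuous extensions of the iterated derivatives of m₂
  set g : ℕ → ℝ → ℝ :=
    fun k x => iteratedDerivWithin k m₂ (Icc 0 b) (projIcc 0 b hb' x) with hg
  have hgD : ∀ k : ℕ, ∀ x ∈ Icc (0:ℝ) b, g k x = iteratedDerivWithin k m₂ (Icc 0 b) x := by
    intro k x hx
    rw [hg]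
    simp [projIcc_of_mem hb' hx]
  have hDc : ∀ k : ℕ, (k:ℕ∞) ≤ 3 →
      ContinuousOn (iteratedDerivWithin k m₂ (Icc 0 b)) (Icc 0 b) :=
    fun k hk => hm₂.continuousOn_iteratedDerivWithin (by exact_mod_cast hk) hus
  have hgc : ∀ k : ℕ, (k:ℕ∞) ≤ 3 → Continuous (g k) := by
    intro k hk
    exact ((hDc k hk).restrict).comp continuous_projIcc
  -- interior derivatives of the extensions
  have hder : ∀ k : ℕ, (k:ℕ∞) < 3 → ∀ x ∈ Ioo (0:ℝ) b, HasDerivAt (g k) (g (k+1) x) x := by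
    intro k hk x hx
    have hxs : x ∈ Icc (0:ℝ) b := Ioo_subset_Icc_self hx
    have h1 : DifferentiableWithinAt ℝ (iteratedDerivWithin k m₂ (Icc 0 b)) (Icc 0 b) x :=
      hm₂.differentiableOn_iteratedDerivWithin (by exact_mod_cast hk) hus x hxs
    have h2 : HasDerivWithinAt (iteratedDerivWithin k m₂ (Icc 0 b))
        (iteratedDerivWithin (k+1) m₂ (Icc 0 b) x) (Icc 0 b) x := by
      have h3 := h1.hasDerivWithinAt
      rwa [← iteratedDerivWithin_succ] at h3
    have hsx : Icc (0:ℝ) b ∈ nhds x := Icc_mem_nhds hx.1 hx.2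
    have h3 : HasDerivAt (iteratedDerivWithin k m₂ (Icc 0 b))
        (iteratedDerivWithin (k+1) m₂ (Icc 0 b) x) x := h2.hasDerivAt hsx
    have h4 : g k =ᶠ[nhds x] iteratedDerivWithin k m₂ (Icc 0 b) := by
      filter_upwards [hsx] with y hy using hgD k y hy
    rw [hgD (k+1) x hxs]
    exact h3.congr_of_eventuallyEq h4
  -- the parametric integrals
  set G : ℕ → ℝ → ℝ := fun k r => ∫ t in (0:ℝ)..1, t ^ (k+2) * g k (r*t) with hG
  have hGc : ∀ k : ℕ, (k:ℕ∞) ≤ 3 → Continuous (G k) := by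
    intro k hk
    have huc : Continuous (Function.uncurry fun r t : ℝ => t ^ (k+2) * g k (r*t)) := by
      apply Continuous.mul
      · exact (continuous_snd.pow _)
      · exact (hgc k hk).comp (continuous_fst.mul continuous_snd)
    rw [hG]
    exact intervalIntegral.continuous_parametric_intervalIntegral_of_continuous' huc 0 1
  -- key identity
  have hkey : ∀ k : ℕ, (k:ℕ∞) < 3 → ∀ r ∈ Icc (0:ℝ) b,
      G k r = g k 0 / (k+3) + ∫ u in (0:ℝ)..r, G (k+1) u := by
    intro k hk r hr
    have hk3 : ((k+1:ℕ):ℕ∞) ≤ 3 := by exact_mod_cast hk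
    have h := aux_key (b := b) k (g k) (g (k+1))
      ((hgc k hk.le).continuousOn) ((hgc (k+1) hk3).continuousOn) (hder k hk) r hr
    rw [hG]
    exact h
  -- one-sided derivatives of G
  have hGd : ∀ k : ℕ, (k:ℕ∞) < 3 → ∀ r ∈ Icc (0:ℝ) b,
      HasDerivWithinAt (G k) (G (k+1) r) (Icc 0 b) r := by
    intro k hk r hr
    have hk3 : ((k+1:ℕ):ℕ∞) ≤ 3 := by exact_mod_cast hk
    have h1 : HasDerivAt (fun u : ℝ => g k 0 / (k+3) + ∫ x in (0:ℝ)..u, G (k+1) x)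
        (G (k+1) r) r := by
      have h2 := intervalIntegral.integral_hasDerivAt_right
        ((hGc (k+1) hk3).intervalIntegrable 0 r)
        ((hGc (k+1) hk3).aestronglyMeasurable.stronglyMeasurableAtFilter)
        ((hGc (k+1) hk3).continuousAt)
      exact h2.const_add _
    exact (h1.hasDerivWithinAt).congr (fun x hx => hkey k hk x hx) (hkey k hk r hr)
  -- m₁ agrees with G 0 on [0,b]
  have hg00 : g 0 0 = 0 := by
    rw [hgD 0 0 h0mem, iteratedDerivWithin_zero, hm₂0]
  have hm1G : EqOn m₁ (G 0) (Icc (0:ℝ) b) := by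
    intro r hr
    rcases eq_or_lt_of_le hr.1 with h0 | h0
    · rw [← h0, hm₁0, hG]
      simp [hg00]
    · rw [hm₁ r ⟨h0, hr.2⟩]
      have hr0 : r ≠ 0 := ne_of_gt h0
      have e1 : EqOn (fun t : ℝ => t^(0+2) * g 0 (r*t))
          (fun t : ℝ => r⁻¹^2 * ((t*r)^2 * g 0 (t*r))) (uIcc (0:ℝ) 1) := by
        intro t _
        simp only [zero_add]
        rw [mul_comm r t]
        field_simp
      have c3 := intervalIntegral.integral_comp_mul_right
        (a := 0) (b := 1) (fun x : ℝ => x^2 * g 0 x) hr0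
      simp only [zero_mul, one_mul, smul_eq_mul] at c3
      have c4 : (∫ x in (0:ℝ)..r, x^2 * g 0 x) = ∫ x in (0:ℝ)..r, x^2 * m₂ x := by
        apply intervalIntegral.integral_congr
        intro x hx
        rw [uIcc_of_le h0.le] at hx
        have hxb : x ∈ Icc (0:ℝ) b := ⟨hx.1, le_trans hx.2 hr.2⟩
        show x^2 * g 0 x = x^2 * m₂ x
        rw [hgD 0 x hxb, iteratedDerivWithin_zero]
      rw [hG]
      show r⁻¹ ^ 3 * (∫ x in (0:ℝ)..r, x ^ 2 * m₂ x) = ∫ t in (0:ℝ)..1, t ^ (0+2) * g 0 (r*t)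
      rw [intervalIntegral.integral_congr e1, intervalIntegral.integral_const_mul, c3, c4]
      ring
  -- derivWithin of G
  have hgdw : ∀ k : ℕ, (k:ℕ∞) < 3 → ∀ r ∈ Icc (0:ℝ) b,
      derivWithin (G k) (Icc 0 b) r = G (k+1) r :=
    fun k hk r hr => (hGd k hk r hr).derivWithin (hus r hr)
  -- iterated derivatives of m₁ equal G
  have hiter : ∀ k : ℕ, (k:ℕ∞) ≤ 3 →
      EqOn (iteratedDerivWithin k m₁ (Icc 0 b)) (G k) (Icc (0:ℝ) b) := by
    intro k
    induction k with
    | zero => intro _ r hr; simpa using hm1G hr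
    | succ n ih =>
      intro hn r hr
      have hnn : n + 1 ≤ 3 := by exact_mod_cast hn
      have hn3 : (n:ℕ∞) < 3 := by exact_mod_cast (by omega : n < 3)
      rw [iteratedDerivWithin_succ]
      rw [derivWithin_congr (ih hn3.le) (ih hn3.le hr)]
      exact hgdw n hn3 r hr
  -- C³ regularity
  have hcd3 : ContDiffOn ℝ (3:ℕ∞) m₁ (Icc 0 b) := by
    rw [contDiffOn_iff_continuousOn_differentiableOn_deriv hus]
    constructor
    · intro m hm
      exact ((hGc m hm).continuousOn).congr (hiter m hm)
    · intro m hm x hx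
      exact ((hGd m hm x hx).congr (fun y hy => hiter m hm.le hy)
        (hiter m hm.le hx)).differentiableWithinAt
  refine ⟨by exact_mod_cast hcd3, ?_⟩
  -- the value of the third derivative at 0
  have h30 : iteratedDerivWithin 3 m₁ (Icc 0 b) 0 = G 3 0 := hiter 3 le_rfl h0mem
  rw [h30, hG]
  show (∫ t in (0:ℝ)..1, t ^ (3+2) * g 3 (0*t)) = iteratedDerivWithin 3 m₂ (Icc 0 b) 0 / 6
  simp only [zero_mul]
  rw [intervalIntegral.integral_mul_const, integral_pow, hgD 3 0 h0mem]
  norm_num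
  ring
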